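/- Let X be an infinite-dimensional real Hilbert space and let C ⊆ X be a nonempty unbounded closed convex subset that is locally compact. Then C does not have the strong separation property; i.e. there exists a nonempty closed convex set D ⊆ X disjoint from C such that no x* ∈ X* \ {0} satisfies sup{⟨x*, c⟩ : c ∈ C} < inf{⟨x*, d⟩ : d ∈ D}. -/

import Mathlib

open Metric Set Filter

section Auxiliary

variable {X : Type*} [NormedAddCommGroup X] [InnerProductSpace ℝ X]

/-- bounded slices of a locally compact closed convex set are compact -/
lemma slices_compact (C : Set X) (hcl : IsClosed C) (hconv : Convex ℝ C)
    {c₀ : X} (hc₀ : c₀ ∈ C) {r : ℝ} (hr : 0 < r)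
    (hK : IsCompact (C ∩ closedBall c₀ r)) (R : ℝ) :
    IsCompact (C ∩ closedBall c₀ R) := by
  rcases le_or_gt R r with h | h
  · exact hK.of_isClosed_subset (hcl.inter isClosed_closedBall)
      (inter_subset_inter_right _ (closedBall_subset_closedBall h))
  · have hR : 0 < R := hr.trans h
    have himg : IsCompact ((fun y => c₀ + (R / r) • (y - c₀)) '' (C ∩ closedBall c₀ r)) :=
      hK.image (continuous_const.add ((continuous_id.sub continuous_const).const_smul _))
    refine himg.of_isClosed_subset (hcl.inter isClosed_closedBall) ?_
    rintro x ⟨hxC, hxB⟩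
    refine ⟨c₀ + (r / R) • (x - c₀), ⟨?_, ?_⟩, ?_⟩
    · have h01 : r / R ∈ Set.Icc (0:ℝ) 1 := by
        constructor
        · positivity
        · rw [div_le_one hR]; exact h.le
      have := hconv hc₀ hxC (a := 1 - r / R) (b := r / R) (by linarith [h01.2]) h01.1 (by ring)
      convert this using 1
      module
    · rw [mem_closedBall, dist_eq_norm]
      have : c₀ + (r / R) • (x - c₀) - c₀ = (r / R) • (x - c₀) := by abel
      rw [this, norm_smul, Real.norm_eq_abs, abs_of_pos (show (0:ℝ) < r/R by positivity)]
      have hx : ‖x - c₀‖ ≤ R := by rwa [mem_closedBall, dist_eq_norm] at hxB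
      calc r / R * ‖x - c₀‖ ≤ r / R * R := by
            exact mul_le_mul_of_nonneg_left hx (by positivity)
        _ = r := by field_simp
    · show c₀ + (R / r) • ((c₀ + (r / R) • (x - c₀)) - c₀) = x
      have h1 : (c₀ + (r / R) • (x - c₀)) - c₀ = (r / R) • (x - c₀) := by abel
      rw [h1, smul_smul]
      have : R / r * (r / R) = 1 := by field_simp
      rw [this, one_smul]
      abel

lemma ray_exists (C : Set X) (hcl : IsClosed C) (hconv : Convex ℝ C)
    (hunbdd : ¬ Bornology.IsBounded C)
    {c₀ : X} (hc₀ : c₀ ∈ C) {r : ℝ} (hr : 0 < r)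
    (hK : IsCompact (C ∩ closedBall c₀ r)) :
    ∃ v : X, ‖v‖ = 1 ∧ ∀ t : ℝ, 0 ≤ t → c₀ + t • v ∈ C := by
  have hfar : ∀ n : ℕ, ∃ c ∈ C, (n : ℝ) + r < ‖c - c₀‖ := by
    intro n
    by_contra hcon
    push_neg at hcon
    exact hunbdd ((isBounded_iff_subset_closedBall c₀).2 ⟨(n : ℝ) + r, fun x hx => by
      rw [mem_closedBall, dist_eq_norm]; exact hcon x hx⟩)
  choose c hc hcd using hfar
  set d : ℕ → ℝ := fun n => ‖c n - c₀‖ with hd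
  have hdd : ∀ n, ‖c n - c₀‖ = d n := fun n => rfl
  have hdpos : ∀ n, 0 < d n := fun n => lt_of_le_of_lt (by positivity) (hcd n)
  have hdr : ∀ n, r ≤ d n := fun n => le_of_lt (lt_of_le_of_lt (by linarith [Nat.cast_nonneg (α := ℝ) n]) (hcd n))
  have hdn : ∀ n : ℕ, (n : ℝ) < d n := fun n => lt_of_le_of_lt (by linarith [hr]) (hcd n)
  have hseg : ∀ n : ℕ, ∀ t : ℝ, 0 ≤ t → t ≤ d n → c₀ + (t / d n) • (c n - c₀) ∈ C := by
    intro n t ht htd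
    have h01 : t / d n ∈ Set.Icc (0:ℝ) 1 := ⟨by positivity, by
      rw [div_le_one (hdpos n)]; exact htd⟩
    have := hconv hc₀ (hc n) (a := 1 - t / d n) (b := t / d n)
      (by linarith [h01.2]) h01.1 (by ring)
    convert this using 1
    module
  set x : ℕ → X := fun n => c₀ + (r / d n) • (c n - c₀) with hx
  have hxnorm : ∀ n, ‖x n - c₀‖ = r := by
    intro n
    have h1 : x n - c₀ = (r / d n) • (c n - c₀) := by simp [hx]
    rw [h1, norm_smul, Real.norm_eq_abs,
      abs_of_pos (div_pos hr (hdpos n)), hdd, div_mul_eq_mul_div, mul_div_assoc,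
      div_self (hdpos n).ne', mul_one]
  have hxK : ∀ n, x n ∈ C ∩ closedBall c₀ r := by
    intro n
    refine ⟨hseg n r hr.le (hdr n), ?_⟩
    rw [mem_closedBall, dist_eq_norm, hxnorm]
  obtain ⟨y, hyK, φ, hφ, htend⟩ := hK.tendsto_subseq hxK
  have hyr : ‖y - c₀‖ = r := by
    have h1 : Tendsto (fun n => ‖x (φ n) - c₀‖) atTop (nhds ‖y - c₀‖) :=
      ((htend.sub tendsto_const_nhds).norm)
    have h2 : Tendsto (fun _ : ℕ => r) atTop (nhds ‖y - c₀‖) := by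
      simpa only [hxnorm] using h1
    exact tendsto_nhds_unique h2 tendsto_const_nhds
  refine ⟨r⁻¹ • (y - c₀), ?_, ?_⟩
  · rw [norm_smul, Real.norm_eq_abs, abs_of_pos (by positivity : (0:ℝ) < r⁻¹), hyr]
    field_simp
  · intro t ht
    have key : Tendsto (fun n => c₀ + (t / r) • (x (φ n) - c₀)) atTop
        (nhds (c₀ + (t / r) • (y - c₀))) :=
      tendsto_const_nhds.add (((htend.sub tendsto_const_nhds).const_smul _))
    have hmem : ∀ᶠ n in atTop, c₀ + (t / r) • (x (φ n) - c₀) ∈ C := by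
      filter_upwards [eventually_ge_atTop ⌈t⌉₊] with n hn
      have hdt : t ≤ d (φ n) := by
        have h1 : (⌈t⌉₊ : ℝ) ≤ (φ n : ℝ) := by
          exact_mod_cast le_trans hn (hφ.le_apply)
        linarith [Nat.le_ceil t, hdn (φ n)]
      have heq : c₀ + (t / r) • (x (φ n) - c₀) = c₀ + (t / d (φ n)) • (c (φ n) - c₀) := by
        have hx' : x (φ n) - c₀ = (r / d (φ n)) • (c (φ n) - c₀) := by simp [hx]
        rw [hx', smul_smul]
        congr 2
        field_simp
      rw [heq]
      exact hseg (φ n) t ht hdt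
    have hC : c₀ + (t / r) • (y - c₀) ∈ C := hcl.mem_of_tendsto key hmem
    rw [smul_smul, ← div_eq_mul_inv]
    exact hC

lemma w_exists [CompleteSpace X] (hinf : ¬ FiniteDimensional ℝ X) (C : Set X)
    {c₀ : X} {v : X} (hv : ‖v‖ = 1) (hcl : IsClosed C)
    (hslice : ∀ R : ℝ, IsCompact (C ∩ closedBall c₀ R)) :
    ∃ w : X, (inner ℝ v w : ℝ) = 0 ∧ ‖w‖ = 1 ∧
      ∀ α β : ℝ, β ≠ 0 → c₀ + α • v + β • w ∉ C := by
  have hvv : (inner ℝ v v : ℝ) = 1 := by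
    rw [real_inner_self_eq_norm_mul_norm, hv, mul_one]
  by_contra hcon
  push_neg at hcon
  -- the projection onto the orthogonal complement of v
  set P : X → X := fun z => z - (inner ℝ v z : ℝ) • v with hP
  have hPcont : Continuous P :=
    continuous_id.sub ((continuous_const.inner continuous_id).smul continuous_const)
  -- the compact "directions" sets
  set S : ℕ → Set X := fun n =>
    (C ∩ closedBall c₀ ((n : ℝ) + 1)) ∩ {c | 1 / ((n : ℝ) + 1) ≤ ‖P (c - c₀)‖} with hS
  have hScpt : ∀ n, IsCompact (S n) := by
    intro n
    refine (hslice ((n : ℝ) + 1)).of_isClosed_subset ?_ inter_subset_left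
    exact ((hcl.inter isClosed_closedBall).inter
      (isClosed_le continuous_const ((hPcont.comp (continuous_id.sub continuous_const)).norm)))
  set A : ℕ → Set X := fun n =>
    insert 0 ((fun c => ‖P (c - c₀)‖⁻¹ • P (c - c₀)) '' S n) with hA
  have hAcpt : ∀ n, IsCompact (A n) := by
    intro n
    refine ((hScpt n).image_of_continuousOn ?_).insert 0
    refine ContinuousOn.smul ?_ ((hPcont.comp (continuous_id.sub continuous_const)).continuousOn)
    refine ContinuousOn.inv₀
      ((hPcont.comp (continuous_id.sub continuous_const)).norm.continuousOn) ?_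
    intro c hc
    have h1 : 1 / ((n : ℝ) + 1) ≤ ‖P (c - c₀)‖ := hc.2
    have h0 : (0:ℝ) < 1 / ((n : ℝ) + 1) := by positivity
    exact ne_of_gt (lt_of_lt_of_le h0 h1)
  set F : ℕ × ℕ × ℕ → Set X := fun i =>
    (fun p : ℝ × ℝ × X => p.1 • v + p.2.1 • p.2.2) ''
      ((Icc (-(i.2.2 : ℝ)) (i.2.2 : ℝ)) ×ˢ (Icc (-(i.2.1 : ℝ)) (i.2.1 : ℝ)) ×ˢ A i.1) with hF
  have hFcpt : ∀ i, IsCompact (F i) := by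
    intro i
    refine (IsCompact.prod isCompact_Icc ((isCompact_Icc).prod (hAcpt i.1))).image ?_
    exact (continuous_fst.smul continuous_const).add
      ((continuous_fst.comp continuous_snd).smul (continuous_snd.comp continuous_snd))
  -- The union of the F i covers X
  have hcover : (⋃ i, F i) = univ := by
    refine eq_univ_of_forall fun x => ?_
    set ξ : ℝ := inner ℝ v x with hξ
    set z : X := x - ξ • v with hz
    have hxz : x = ξ • v + z := by rw [hz]; abel
    rcases eq_or_ne z 0 with hz0 | hz0
    · -- x is a multiple of v
      refine mem_iUnion.2 ⟨(0, 1, ⌈|ξ|⌉₊), ⟨(ξ, (1:ℝ), 0), ⟨?_, ?_, ?_⟩, ?_⟩⟩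
      · simp only [mem_Icc]
        constructor
        · linarith [Nat.le_ceil |ξ|, abs_nonneg ξ, neg_abs_le ξ]
        · linarith [Nat.le_ceil |ξ|, le_abs_self ξ]
      · simp only [mem_Icc]; norm_num
      · exact mem_insert 0 _
      · simp only [smul_zero, add_zero]
        rw [hxz, hz0, add_zero]
    · -- general case
      set w : X := ‖z‖⁻¹ • z with hw
      have hzn : ‖z‖ ≠ 0 := by simpa using hz0
      have hznpos : 0 < ‖z‖ := lt_of_le_of_ne (norm_nonneg z) (Ne.symm hzn)
      have hvw : (inner ℝ v w : ℝ) = 0 := by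
        rw [hw, real_inner_smul_right, hz, inner_sub_right, real_inner_smul_right, hvv]
        simp [hξ]
      have hwn : ‖w‖ = 1 := by
        rw [hw, norm_smul, Real.norm_eq_abs, abs_of_pos (by positivity), inv_mul_cancel₀ hzn]
      obtain ⟨α, β, hβ, hmem⟩ := hcon w hvw hwn
      set cc : X := c₀ + α • v + β • w with hcc
      have hPcc : P (cc - c₀) = β • w := by
        have h1 : cc - c₀ = α • v + β • w := by rw [hcc]; abel
        rw [h1, hP]
        simp only [inner_add_right, real_inner_smul_right, hvv, hvw]
        simp
      have hPccn : ‖P (cc - c₀)‖ = |β| := by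
        rw [hPcc, norm_smul, Real.norm_eq_abs, hwn, mul_one]
      have hβpos : 0 < |β| := abs_pos.2 hβ
      set n : ℕ := max ⌈‖cc - c₀‖⌉₊ ⌈1/|β|⌉₊ with hn
      have hccS : cc ∈ S n := by
        refine ⟨⟨hmem, ?_⟩, ?_⟩
        · rw [mem_closedBall, dist_eq_norm]
          have := Nat.le_ceil ‖cc - c₀‖
          have h2 : (⌈‖cc - c₀‖⌉₊ : ℝ) ≤ (n : ℝ) := by exact_mod_cast Nat.cast_le.2 (le_max_left _ _)
          linarith
        · show 1 / ((n:ℝ)+1) ≤ ‖P (cc - c₀)‖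
          rw [hPccn]
          have h1 : 1/|β| ≤ (n : ℝ) + 1 := by
            have := Nat.le_ceil (1/|β|)
            have h2 : (⌈1/|β|⌉₊ : ℝ) ≤ (n : ℝ) := by exact_mod_cast Nat.cast_le.2 (le_max_right _ _)
            linarith
          rw [div_le_iff₀ (by positivity)]
          calc (1:ℝ) = |β| * (1/|β|) := by field_simp
            _ ≤ |β| * ((n:ℝ)+1) := by
                exact mul_le_mul_of_nonneg_left h1 (abs_nonneg β)
      set u : X := ‖P (cc - c₀)‖⁻¹ • P (cc - c₀) with hu
      have huA : u ∈ A n := mem_insert_of_mem _ ⟨cc, hccS, rfl⟩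
      have huw : u = (|β|⁻¹ * β) • w := by
        rw [hu, hPccn, hPcc, smul_smul]
      -- x = ξ • v + c' • u where c' = sign(β) * ‖z‖
      set c' : ℝ := (|β|⁻¹ * β) * ‖z‖ with hc'
      have hcu : c' • u = z := by
        rw [huw, hc', smul_smul]
        have : |β|⁻¹ * β * ‖z‖ * (|β|⁻¹ * β) = ‖z‖ := by
          rcases abs_choice β with h | h <;> rw [h] <;> field_simp <;> ring
        rw [this, hw, smul_smul, mul_inv_cancel₀ hzn, one_smul]
      have hc'abs : |c'| = ‖z‖ := by
        rw [hc', abs_mul, abs_mul, abs_inv, abs_abs, inv_mul_cancel₀ (ne_of_gt hβpos),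
          one_mul, abs_of_pos hznpos]
      refine mem_iUnion.2 ⟨(n, ⌈‖z‖⌉₊, ⌈|ξ|⌉₊), ⟨(ξ, c', u), ⟨?_, ?_, huA⟩, ?_⟩⟩
      · simp only [mem_Icc]
        constructor
        · linarith [Nat.le_ceil |ξ|, neg_abs_le ξ]
        · linarith [Nat.le_ceil |ξ|, le_abs_self ξ]
      · simp only [mem_Icc]
        constructor
        · linarith [Nat.le_ceil ‖z‖, neg_abs_le c', hc'abs, abs_nonneg c']
        · have h1 := Nat.le_ceil ‖z‖
          have h2 : c' ≤ |c'| := le_abs_self c'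
          rw [hc'abs] at h2
          linarith
      · show ξ • v + c' • u = x
        rw [hcu, hxz]
  -- Baire category
  have : Nonempty X := ⟨0⟩
  obtain ⟨i, hi⟩ := nonempty_interior_of_iUnion_of_closed (fun i => (hFcpt i).isClosed) hcover
  obtain ⟨x, hx⟩ := hi
  obtain ⟨ε, hε, hball⟩ := Metric.mem_nhds_iff.1 (mem_interior_iff_mem_nhds.1 hx)
  have hcball : IsCompact (closedBall x (ε/2)) :=
    (hFcpt i).of_isClosed_subset isClosed_closedBall
      ((closedBall_subset_ball (by linarith)).trans hball)
  exact hinf (FiniteDimensional.of_isCompact_closedBall ℝ (by linarith : (0:ℝ) < ε/2) hcball)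

end Auxiliary

/-- `C` and `D` are strongly separated. -/
def StronglySeparated {X : Type*} [NormedAddCommGroup X] [NormedSpace ℝ X]
    (C D : Set X) : Prop :=
  ∃ f : X →L[ℝ] ℝ, f ≠ 0 ∧ ∃ a b : ℝ, a < b ∧ (∀ c ∈ C, f c ≤ a) ∧ ∀ d ∈ D, b ≤ f d

section Construction

variable {X : Type*} [NormedAddCommGroup X] [InnerProductSpace ℝ X]

set_option maxHeartbeats 1000000 in
lemma construction (C : Set X) {c₀ v w : X}
    (hv : ‖v‖ = 1) (hw : ‖w‖ = 1) (hvw : (inner ℝ v w : ℝ) = 0)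
    (hray : ∀ t : ℝ, 0 ≤ t → c₀ + t • v ∈ C)
    (hmiss : ∀ α β : ℝ, β ≠ 0 → c₀ + α • v + β • w ∉ C) :
    ∃ D : Set X, D.Nonempty ∧ IsClosed D ∧ Convex ℝ D ∧ Disjoint C D ∧
      ¬ StronglySeparated C D := by
  have hvv : (inner ℝ v v : ℝ) = 1 := by rw [real_inner_self_eq_norm_mul_norm, hv, mul_one]
  have hww : (inner ℝ w w : ℝ) = 1 := by rw [real_inner_self_eq_norm_mul_norm, hw, mul_one]
  have hwv : (inner ℝ w v : ℝ) = 0 := by rw [real_inner_comm, hvw]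
  set a : X → ℝ := fun x => inner ℝ v (x - c₀) with ha
  set b : X → ℝ := fun x => inner ℝ w (x - c₀) with hb
  have hacont : Continuous a := (continuous_const.inner (continuous_id.sub continuous_const))
  have hbcont : Continuous b := (continuous_const.inner (continuous_id.sub continuous_const))
  -- key computation
  have hcomp : ∀ α β : ℝ, a (c₀ + α • v + β • w) = α ∧ b (c₀ + α • v + β • w) = β := by
    intro α β
    have h1 : c₀ + α • v + β • w - c₀ = α • v + β • w := by abel
    constructor
    · rw [ha]; simp only [h1, inner_add_right, real_inner_smul_right, hvv, hvw]; ring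
    · rw [hb]; simp only [h1, inner_add_right, real_inner_smul_right, hww, hwv]; ring
  refine ⟨{x | x = c₀ + a x • v + b x • w ∧ 0 ≤ a x ∧ b x ≤ 1 ∧ 1 ≤ b x * (1 + a x)},
    ⟨c₀ + w, ?_⟩, ?_, ?_, ?_, ?_⟩
  -- Nonempty: c₀ + w = c₀ + 0•v + 1•w
  · have h0 : c₀ + w = c₀ + (0:ℝ) • v + (1:ℝ) • w := by simp
    rw [mem_setOf_eq, h0]
    obtain ⟨h1, h2⟩ := hcomp 0 1
    rw [h1, h2]
    norm_num
  -- Closed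
  · simp only [setOf_and]
    refine IsClosed.inter (isClosed_eq continuous_id ?_) (IsClosed.inter ?_ (IsClosed.inter ?_ ?_))
    · exact (continuous_const.add ((hacont.smul continuous_const))).add
        (hbcont.smul continuous_const)
    · exact isClosed_le continuous_const hacont
    · exact isClosed_le hbcont continuous_const
    · exact isClosed_le continuous_const (hbcont.mul (continuous_const.add hacont))
  -- Convex
  · rintro x ⟨hxe, hxa, hxb, hxp⟩ y ⟨hye, hya, hyb, hyp⟩ s t hs ht hst
    have ht' : t = 1 - s := by linarith
    subst ht'
    have hbxpos : 0 < b x := by nlinarith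
    have hbypos : 0 < b y := by nlinarith
    have hae : a (s • x + (1-s) • y) = s * a x + (1-s) * a y := by
      have h1 : s • x + (1-s) • y - c₀ = s • (x - c₀) + (1-s) • (y - c₀) := by module
      rw [ha]
      simp only [h1, inner_add_right, real_inner_smul_right]
    have hbe : b (s • x + (1-s) • y) = s * b x + (1-s) * b y := by
      have h1 : s • x + (1-s) • y - c₀ = s • (x - c₀) + (1-s) • (y - c₀) := by module
      rw [hb]
      simp only [h1, inner_add_right, real_inner_smul_right]
    refine ⟨?_, ?_, ?_, ?_⟩
    · rw [hae, hbe]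
      nth_rewrite 1 [hxe]
      nth_rewrite 1 [hye]
      module
    · rw [hae]; nlinarith
    · rw [hbe]; nlinarith
    · rw [hae, hbe]
      have hprod : 1 ≤ (b x * (1 + a y)) * (b y * (1 + a x)) := by
        nlinarith [mul_le_mul hxp hyp (by norm_num) (by positivity :
          (0:ℝ) ≤ b x * (1 + a x))]
      have hXpos : 0 < b x * (1 + a y) := by positivity
      have hYpos : 0 < b y * (1 + a x) := by positivity
      have hsum : 2 ≤ b x * (1 + a y) + b y * (1 + a x) := by
        nlinarith [sq_nonneg (b x * (1 + a y) - b y * (1 + a x)), hXpos.le, hYpos.le]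
      nlinarith [mul_nonneg hs ht, sq_nonneg s, sq_nonneg (1 - s),
        mul_nonneg (mul_nonneg hs hs) (by linarith : (0:ℝ) ≤ b x * (1 + a x) - 1),
        mul_nonneg (mul_nonneg ht ht) (by linarith : (0:ℝ) ≤ b y * (1 + a y) - 1),
        mul_nonneg (mul_nonneg hs ht) (by linarith :
          (0:ℝ) ≤ b x * (1 + a y) + b y * (1 + a x) - 2)]
  -- Disjoint
  · rw [Set.disjoint_left]
    rintro x hxC ⟨hxe, hxa, hxb, hxp⟩
    have hbpos : 0 < b x := by nlinarith
    rw [hxe] at hxC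
    exact hmiss (a x) (b x) (ne_of_gt hbpos) hxC
  -- Not strongly separated
  · rintro ⟨f, hf0, p, q, hpq, hCp, hDq⟩
    have hD : ∀ t : ℝ, 0 ≤ t → (c₀ + t • v + (1 + t)⁻¹ • w ∈
        {x | x = c₀ + a x • v + b x • w ∧ 0 ≤ a x ∧ b x ≤ 1 ∧ 1 ≤ b x * (1 + a x)}) := by
      intro t htnn
      obtain ⟨h1, h2⟩ := hcomp t (1 + t)⁻¹
      have h1t : (0:ℝ) < 1 + t := by linarith
      refine ⟨?_, ?_, ?_, ?_⟩
      · rw [h1, h2]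
      · rw [h1]; exact htnn
      · rw [h2]
        rw [inv_le_one_iff₀]
        right; linarith
      · rw [h1, h2, inv_mul_cancel₀ (ne_of_gt h1t)]
    have key : ∀ t : ℝ, 0 ≤ t → q - p ≤ (1 + t)⁻¹ * f w := by
      intro t htnn
      have hC : c₀ + t • v ∈ C := hray t htnn
      have h1 : f (c₀ + t • v + (1 + t)⁻¹ • w) = f (c₀ + t • v) + (1 + t)⁻¹ * f w := by
        rw [map_add, map_smul, smul_eq_mul]
      have h2 := hDq _ (hD t htnn)
      have h3 := hCp _ hC
      rw [h1] at h2
      linarith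
    rcases le_or_gt (f w) 0 with hfw | hfw
    · have := key 0 le_rfl
      norm_num at this
      linarith
    · set δ : ℝ := q - p with hδ
      have hδpos : 0 < δ := by rw [hδ]; linarith
      have := key (f w / δ) (by positivity)
      have h1t : (0:ℝ) < 1 + f w / δ := by positivity
      rw [inv_mul_eq_div, le_div_iff₀ h1t] at this
      have hexp : δ * (1 + f w / δ) = δ + f w := by field_simp
      rw [hexp] at this
      linarith

end Construction

/-- In an infinite-dimensional real Hilbert space, a nonempty unbounded closed
convex locally compact set `C` does not have the strong separation property: some nonempty
closed convex set `D` disjoint from `C` cannot be strongly separated from `C`. -/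
theorem statement11 {X : Type*} [NormedAddCommGroup X] [InnerProductSpace ℝ X]
    [CompleteSpace X] (hinf : ¬ FiniteDimensional ℝ X)
    (C : Set X) (hne : C.Nonempty) (hcl : IsClosed C) (hconv : Convex ℝ C)
    (hunbdd : ¬ Bornology.IsBounded C)
    (hloc : ∃ c₀ ∈ C, ∃ r > (0 : ℝ), IsCompact (C ∩ Metric.closedBall c₀ r)) :
    ∃ D : Set X, D.Nonempty ∧ IsClosed D ∧ Convex ℝ D ∧ Disjoint C D ∧
      ¬ StronglySeparated C D := by
  obtain ⟨c₀, hc₀, r, hr, hK⟩ := hloc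
  have hslice := slices_compact C hcl hconv hc₀ hr hK
  obtain ⟨v, hv, hray⟩ := ray_exists C hcl hconv hunbdd hc₀ hr hK
  obtain ⟨w, hvw, hw, hmiss⟩ := w_exists hinf C hv hcl hslice
  exact construction C hv hw hvw hray hmiss
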